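/- Exponential moment of the Brownian quadratic functional ∫₀^T B_s²/s ds: Let B be a standard one-dimensional Brownian motion, T > 0 and k > 0 with 2kT < 1. Then E[exp(k ∫₀^T B_s²/s ds)] ≤ Σ_{n=0}^∞ (kT)^n · (2n)!/(2^n (n!)²), and this series converges, so the left-hand side is finite. -/

import Mathlib

open MeasureTheory ProbabilityTheory Set

/-- A standard one-dimensional Brownian motion: continuous paths, `B 0 = 0`,
Gaussian increments `B t - B s ~ N(0, t - s)`, and independent increments
over disjoint intervals. -/
structure IsStdBrownianMotion {Ω : Type*} [MeasurableSpace Ω] (P : Measure Ω)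
    (B : ℝ → Ω → ℝ) : Prop where
  init : ∀ ω, B 0 ω = 0
  cont : ∀ ω, Continuous fun t => B t ω
  meas : ∀ t, Measurable (B t)
  gauss : ∀ s t : ℝ, 0 ≤ s → s ≤ t →
    P.map (fun ω => B t ω - B s ω) = gaussianReal 0 (t - s).toNNReal
  indep : ∀ s t u v : ℝ, 0 ≤ s → s ≤ t → t ≤ u → u ≤ v →
    IndepFun (fun ω => B t ω - B s ω) (fun ω => B v ω - B u ω) P

open Real Filter
open scoped ENNReal NNReal
lemma integrable_pow_mul_exp_neg_mul_sq {b : ℝ} (hb : 0 < b) (m : ℕ) :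
    Integrable fun x : ℝ => x ^ m * Real.exp (-b * x ^ 2) := by
  have h : (-1 : ℝ) < m := lt_of_lt_of_le (by norm_num) (Nat.cast_nonneg m)
  simpa [Real.rpow_natCast] using integrable_rpow_mul_exp_neg_mul_sq hb h

lemma tendsto_pow_mul_exp_neg_mul_sq_atTop {b : ℝ} (hb : 0 < b) (m : ℕ) :
    Tendsto (fun x : ℝ => x ^ m * Real.exp (-b * x ^ 2)) atTop (nhds 0) := by
  have h := rpow_mul_exp_neg_mul_sq_isLittleO_exp_neg hb (m : ℝ)
  have h2 : Tendsto (fun x : ℝ => Real.exp (-(1/2) * x)) atTop (nhds 0) := by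
    have : Tendsto (fun x : ℝ => -(1/2) * x) atTop atBot := by
      apply Tendsto.const_mul_atTop_of_neg (by norm_num) tendsto_id
    exact Real.tendsto_exp_atBot.comp this
  have := h.isBigO.trans_tendsto h2
  simpa [Real.rpow_natCast] using this

lemma gauss_moment_rec {b : ℝ} (hb : 0 < b) (n : ℕ) :
    ∫ x : ℝ, x ^ (2 * (n+1)) * Real.exp (-b * x ^ 2)
      = (2 * n + 1) / (2 * b) * ∫ x : ℝ, x ^ (2 * n) * Real.exp (-b * x ^ 2) := by
  set F : ℝ → ℝ := fun x => x ^ (2 * n + 1) * Real.exp (-b * x ^ 2) with hF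
  set d : ℝ → ℝ := fun x =>
    (2 * n + 1 : ℝ) * (x ^ (2 * n) * Real.exp (-b * x ^ 2))
      - 2 * b * (x ^ (2 * (n + 1)) * Real.exp (-b * x ^ 2)) with hd
  have hderiv : ∀ x : ℝ, HasDerivAt F (d x) x := by
    intro x
    have h1 : HasDerivAt (fun x : ℝ => x ^ (2 * n + 1))
        ((2 * n + 1 : ℝ) * x ^ (2 * n)) x := by
      simpa using hasDerivAt_pow (2 * n + 1) x
    have h0 : HasDerivAt (fun x : ℝ => -b * x ^ 2) (-b * (2 * x)) x := by
      simpa using (hasDerivAt_pow 2 x).const_mul (-b)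
    have h2 := h0.exp
    have := h1.mul h2
    convert this using 1
    case e'_4 => rfl
    case e'_5 => rfl
    case e'_8 => rfl
    rw [hd]
    rw [show 2 * (n + 1) = (2 * n + 1) + 1 by ring]
    rw [pow_succ]
    ring
  have hint : ∀ m : ℕ, Integrable fun x : ℝ => x ^ m * Real.exp (-b * x ^ 2) :=
    integrable_pow_mul_exp_neg_mul_sq hb
  have hdint : Integrable d := ((hint (2*n)).const_mul _).sub ((hint (2*(n+1))).const_mul _)
  have htop : Tendsto F atTop (nhds 0) := tendsto_pow_mul_exp_neg_mul_sq_atTop hb _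
  have hbot : Tendsto F atBot (nhds 0) := by
    have hcomp : Tendsto (fun x : ℝ => F (-x)) atTop (nhds 0) := by
      have : (fun x : ℝ => F (-x)) = fun x => -(x ^ (2*n+1) * Real.exp (-b * x ^ 2)) := by
        funext x
        simp only [hF]
        rw [show (-x) ^ (2*n+1) = -x^(2*n+1) by rw [Odd.neg_pow ⟨n, by ring⟩], neg_sq]
        ring
      rw [this]
      simpa using (tendsto_pow_mul_exp_neg_mul_sq_atTop hb (2*n+1)).neg
    have := hcomp.comp tendsto_neg_atBot_atTop
    simpa [Function.comp_def] using this
  have hFcont : Continuous F := by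
    apply Continuous.mul (continuous_pow _)
    exact Real.continuous_exp.comp (continuous_const.mul (continuous_pow 2))
  have hF0 : F 0 = 0 := by simp [hF]
  have hIoi : ∫ x in Ioi (0:ℝ), d x = 0 - F 0 :=
    integral_Ioi_of_hasDerivAt_of_tendsto hFcont.continuousWithinAt
      (fun x _ => hderiv x) hdint.integrableOn htop
  have hIic : ∫ x in Iic (0:ℝ), d x = F 0 - 0 :=
    integral_Iic_of_hasDerivAt_of_tendsto hFcont.continuousWithinAt
      (fun x _ => hderiv x) hdint.integrableOn hbot
  have htot : ∫ x : ℝ, d x = 0 := by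
    rw [← intervalIntegral.integral_Iic_add_Ioi hdint.integrableOn hdint.integrableOn, hIoi, hIic]
    simp [hF0]
  have hsplit : ∫ x : ℝ, d x
      = (2 * n + 1 : ℝ) * (∫ x : ℝ, x ^ (2*n) * Real.exp (-b * x ^ 2))
        - 2 * b * ∫ x : ℝ, x ^ (2*(n+1)) * Real.exp (-b * x ^ 2) := by
    simp only [hd]
    rw [integral_sub ((hint (2*n)).const_mul _) ((hint (2*(n+1))).const_mul _),
      integral_const_mul, integral_const_mul]
  rw [hsplit] at htot
  have hb' : (2 : ℝ) * b ≠ 0 := by positivity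
  rw [div_mul_eq_mul_div, eq_comm, div_eq_iff hb']
  linarith [htot]

lemma gauss_moment_integral {b : ℝ} (hb : 0 < b) (n : ℕ) :
    ∫ x : ℝ, x ^ (2 * n) * Real.exp (-b * x ^ 2)
      = Real.sqrt (π / b) * (2 * n).factorial / (n.factorial * (4 * b) ^ n) := by
  induction n with
  | zero => simpa using integral_gaussian b
  | succ n ih =>
    rw [gauss_moment_rec hb n, ih]
    have h1 : (2 * (n+1)).factorial = (2*n+2) * ((2*n+1) * (2*n).factorial) := by
      rw [show 2 * (n+1) = (2*n+1)+1 by ring, Nat.factorial_succ, Nat.factorial_succ]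
    have h2 : (n+1).factorial = (n+1) * n.factorial := Nat.factorial_succ n
    rw [h1, h2]
    push_cast
    have hbne : b ≠ 0 := ne_of_gt hb
    have hnf : (n.factorial : ℝ) ≠ 0 := Nat.cast_ne_zero.mpr (Nat.factorial_ne_zero n)
    field_simp
    ring

lemma pow_lintegral_le {α : Type*} [MeasurableSpace α] (μ : Measure α)
    {f : α → ℝ≥0∞} (hf : AEMeasurable f μ) (n : ℕ) (hn : 1 ≤ n) :
    (∫⁻ x, f x ∂μ) ^ n ≤ (μ Set.univ) ^ (n - 1) * ∫⁻ x, (f x) ^ n ∂μ := by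
  rcases eq_or_lt_of_le hn with h1 | h2
  · simp [← h1]
  have hn2 : (1 : ℝ) < (n : ℝ) := by exact_mod_cast h2
  have hpq : (n : ℝ).HolderConjugate ((n : ℝ) / ((n : ℝ) - 1)) :=
    Real.HolderConjugate.conjExponent hn2
  have hH := ENNReal.lintegral_mul_le_Lp_mul_Lq μ hpq hf aemeasurable_const
      (g := fun _ => (1 : ℝ≥0∞))
  simp only [mul_one, ENNReal.one_rpow, Pi.mul_apply] at hH
  rw [lintegral_const, one_mul] at hH
  have key := ENNReal.rpow_le_rpow hH (le_of_lt (lt_trans zero_lt_one hn2)) (z := (n : ℝ))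
  have hne : (n : ℝ) ≠ 0 := by positivity
  calc (∫⁻ x, f x ∂μ) ^ n = ((∫⁻ x, f x ∂μ)) ^ (n : ℝ) := by
        rw [← ENNReal.rpow_natCast]
    _ ≤ (((∫⁻ a, f a ^ (n:ℝ) ∂μ) ^ (1 / (n:ℝ)) * μ univ ^ (1 / ((n:ℝ) / ((n:ℝ) - 1)))) ^ (n:ℝ)) :=
        key
    _ = (∫⁻ a, f a ^ (n:ℝ) ∂μ) * μ univ ^ ((n:ℝ) - 1) := by
        rw [ENNReal.mul_rpow_of_nonneg _ _ (by positivity), ← ENNReal.rpow_mul,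
          ← ENNReal.rpow_mul, one_div_mul_cancel hne]
        rw [ENNReal.rpow_one]
        congr 1
        rw [one_div_div]
        field_simp
    _ = μ univ ^ ((n:ℝ) - 1) * ∫⁻ a, f a ^ n ∂μ := by
        rw [mul_comm]
        congr 1
        refine lintegral_congr fun a => ?_
        rw [← ENNReal.rpow_natCast]
    _ = (μ Set.univ) ^ (n - 1) * ∫⁻ x, (f x) ^ n ∂μ := by
        congr 1
        rw [← ENNReal.rpow_natCast]
        congr 1
        have : (1:ℝ) ≤ (n:ℝ) := le_of_lt hn2
        push_cast [Nat.cast_sub hn]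
        ring

lemma gaussianReal_moment (v : NNReal) (hv : v ≠ 0) (n : ℕ) :
    ∫⁻ x, ENNReal.ofReal (x ^ (2 * n)) ∂(gaussianReal 0 v)
      = ENNReal.ofReal ((v : ℝ) ^ n * (2 * n).factorial / (2 ^ n * n.factorial)) := by
  have hv' : (0 : ℝ) < v := lt_of_le_of_ne v.coe_nonneg (by exact_mod_cast hv.symm)
  have hb : (0 : ℝ) < (2 * (v : ℝ))⁻¹ := by positivity
  rw [gaussianReal_of_var_ne_zero _ hv,
    lintegral_withDensity_eq_lintegral_mul _ (measurable_gaussianPDF _ _)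
      (Measurable.ennreal_ofReal (by fun_prop))]
  have heq : ∀ x : ℝ, (gaussianPDF 0 v * fun x => ENNReal.ofReal (x ^ (2 * n))) x
      = ENNReal.ofReal ((Real.sqrt (2 * π * v))⁻¹ *
          (x ^ (2 * n) * Real.exp (-(2 * (v:ℝ))⁻¹ * x ^ 2))) := by
    intro x
    simp only [Pi.mul_apply, gaussianPDF, gaussianPDFReal]
    rw [← ENNReal.ofReal_mul (by positivity)]
    congr 1
    rw [show -(x - 0) ^ 2 / (2 * (v:ℝ)) = -(2 * (v:ℝ))⁻¹ * x ^ 2 by field_simp; ring]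
    ring
  simp_rw [heq]
  rw [← ofReal_integral_eq_lintegral_ofReal
      (((integrable_pow_mul_exp_neg_mul_sq hb (2*n)).const_mul _))
      (Filter.Eventually.of_forall fun x => mul_nonneg (inv_nonneg.2 (Real.sqrt_nonneg _))
        (mul_nonneg (Even.pow_nonneg (even_two_mul n) x) (Real.exp_nonneg _)))]
  congr 1
  rw [integral_const_mul, gauss_moment_integral hb n]
  have h4 : 4 * (2 * (v:ℝ))⁻¹ = 2 / v := by field_simp; ring
  have hsq : Real.sqrt (π / (2 * (v:ℝ))⁻¹) = Real.sqrt (2 * π * v) := by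
    congr 1
    field_simp
  rw [h4, hsq]
  have hsqrt_pos : 0 < Real.sqrt (2 * π * v) := by
    apply Real.sqrt_pos.mpr; positivity
  have hnf : (n.factorial : ℝ) ≠ 0 := Nat.cast_ne_zero.mpr (Nat.factorial_ne_zero n)
  field_simp
  ring_nf
  rw [← mul_pow, mul_inv_cancel₀ hv'.ne', one_pow, one_mul]

/-- **Exponential moment of the Brownian quadratic functional `∫₀^T B_s²/s ds`.**
If `2kT < 1`, then `E[exp(k ∫₀^T B_s²/s ds)] ≤ Σ_{n=0}^∞ (kT)^n (2n)!/(2^n (n!)²)`,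
and this series converges. -/
theorem exp_moment_quadratic_functional
    {Ω : Type*} [MeasurableSpace Ω] (P : Measure Ω) [IsProbabilityMeasure P]
    (B : ℝ → Ω → ℝ) (hB : IsStdBrownianMotion P B)
    (T k : ℝ) (hT : 0 < T) (hk : 0 < k) (h : 2 * k * T < 1) :
    (Summable fun n : ℕ =>
      (k * T) ^ n * (Nat.factorial (2 * n) : ℝ) / (2 ^ n * (Nat.factorial n : ℝ) ^ 2)) ∧
    ∫⁻ ω, ENNReal.ofReal (Real.exp (k * ∫ s in (0 : ℝ)..T, (B s ω) ^ 2 / s)) ∂P ≤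
      ∑' n : ℕ, ENNReal.ofReal
        ((k * T) ^ n * (Nat.factorial (2 * n) : ℝ) / (2 ^ n * (Nat.factorial n : ℝ) ^ 2)) := by
  have hkT : 0 < k * T := mul_pos hk hT
  set A : ℕ → ℝ := fun n =>
      (k * T) ^ n * (Nat.factorial (2 * n) : ℝ) / (2 ^ n * (Nat.factorial n : ℝ) ^ 2) with hA
  have hApos : ∀ n, 0 < A n := by
    intro n
    have h1 : (0:ℝ) < (2*n).factorial := by exact_mod_cast (2*n).factorial_pos
    have h2 : (0:ℝ) < n.factorial := by exact_mod_cast n.factorial_pos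
    simp only [hA]
    positivity
  -- Summability
  have hfac : ∀ n : ℕ, ((2*(n+1)).factorial : ℝ) = (2*n+2) * ((2*n+1) * (2*n).factorial) := by
    intro n
    rw [show 2*(n+1) = (2*n+1)+1 by ring, Nat.factorial_succ, Nat.factorial_succ]
    push_cast; ring
  have hArec : ∀ n : ℕ, A (n+1) ≤ (2*k*T) * A n := by
    intro n
    have h2 : ((n+1).factorial : ℝ) = (n+1) * n.factorial := by
      rw [Nat.factorial_succ]; push_cast; ring
    have hnf : (n.factorial : ℝ) ≠ 0 := Nat.cast_ne_zero.mpr (Nat.factorial_ne_zero n)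
    have heq : A (n+1) = (k*T*((2*n+1)/(n+1))) * A n := by
      simp only [hA]
      rw [hfac n, h2]
      field_simp
      ring
    rw [heq]
    have hfrac : ((2*(n:ℝ)+1)/((n:ℝ)+1)) ≤ 2 := by
      rw [div_le_iff₀ (by positivity)]
      linarith
    have : k*T*((2*n+1)/(n+1)) ≤ 2*k*T := by
      calc k*T*((2*(n:ℝ)+1)/((n:ℝ)+1)) ≤ k*T*2 := by
            exact mul_le_mul_of_nonneg_left hfrac hkT.le
        _ = 2*k*T := by ring
    exact mul_le_mul_of_nonneg_right this (hApos n).le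
  have hsummable : Summable A := by
    apply summable_of_ratio_norm_eventually_le h
    filter_upwards with n
    rw [Real.norm_of_nonneg (hApos _).le, Real.norm_of_nonneg (hApos _).le]
    exact hArec n
  refine ⟨hsummable, ?_⟩
  -- Measurability setup
  have hBM' : Measurable (Function.uncurry B) :=
    measurable_uncurry_of_continuous_of_measurable hB.cont hB.meas
  have hBM : Measurable fun p : ℝ × Ω => B p.1 p.2 := hBM'
  set g : ℝ × Ω → ℝ≥0∞ := fun p => ENNReal.ofReal ((B p.1 p.2)^2 / p.1) with hgdef
  have hg : Measurable g := ((hBM.pow_const 2).div measurable_fst).ennreal_ofReal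
  set Y : Ω → ℝ≥0∞ := fun ω => ∫⁻ s in Ioc (0:ℝ) T, g (s, ω) with hYdef
  have hY : Measurable Y :=
    Measurable.lintegral_prod_left' (μ := volume.restrict (Ioc (0:ℝ) T)) hg
  -- pointwise bound
  have hptwise : ∀ ω, ENNReal.ofReal (Real.exp (k * ∫ s in (0 : ℝ)..T, (B s ω) ^ 2 / s))
      ≤ ∑' n : ℕ, ENNReal.ofReal (k ^ n / n.factorial) * Y ω ^ n := by
    intro ω
    set X : ℝ := ∫ s in (0 : ℝ)..T, (B s ω) ^ 2 / s with hXdef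
    have hX0 : 0 ≤ X :=
      intervalIntegral.integral_nonneg hT.le (fun s hs => div_nonneg (sq_nonneg _) hs.1)
    have hXY : ENNReal.ofReal X ≤ Y ω := by
      rw [hXdef, intervalIntegral.integral_of_le hT.le]
      by_cases hI : IntegrableOn (fun s => (B s ω)^2 / s) (Ioc 0 T) volume
      · rw [ofReal_integral_eq_lintegral_ofReal hI ((ae_restrict_iff' measurableSet_Ioc).2
          (Filter.Eventually.of_forall fun s hs => div_nonneg (sq_nonneg _) hs.1.le))]
      · rw [MeasureTheory.integral_undef hI]; simp
    have hexp : Real.exp (k * X) = ∑' n : ℕ, (k * X) ^ n / n.factorial := by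
      rw [Real.exp_eq_exp_ℝ, NormedSpace.exp_eq_tsum_div]
    rw [hexp, ENNReal.ofReal_tsum_of_nonneg (fun n => by positivity)
      (Real.summable_pow_div_factorial _)]
    apply ENNReal.tsum_le_tsum
    intro n
    have h1 : (k * X) ^ n / n.factorial = (k ^ n / n.factorial) * X ^ n := by
      rw [mul_pow]; ring
    rw [h1, ENNReal.ofReal_mul (by positivity), ENNReal.ofReal_pow hX0]
    exact mul_le_mul_right (pow_le_pow_left' hXY n) _
  -- per-term bound
  have hterm : ∀ n : ℕ,
      ∫⁻ ω, ENNReal.ofReal (k ^ n / n.factorial) * Y ω ^ n ∂P ≤ ENNReal.ofReal (A n) := by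
    intro n
    rw [lintegral_const_mul _ (hY.pow_const n)]
    rcases Nat.eq_zero_or_pos n with rfl | hn
    · simp [hA]
    -- inner Gaussian computation
    have hinner : ∀ s ∈ Ioc (0:ℝ) T,
        ∫⁻ ω, g (s, ω) ^ n ∂P
          = ENNReal.ofReal (((2*n).factorial : ℝ) / (2^n * n.factorial)) := by
      intro s hs
      have hs0 : 0 < s := hs.1
      have h1 : ∀ ω, g (s, ω) ^ n
          = (ENNReal.ofReal (s^n))⁻¹ * ENNReal.ofReal ((B s ω)^(2*n)) := by
        intro ω
        rw [show g (s,ω) = ENNReal.ofReal ((B s ω)^2/s) from rfl,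
          ← ENNReal.ofReal_pow (div_nonneg (sq_nonneg _) hs0.le), div_pow, ← pow_mul,
          div_eq_inv_mul, ENNReal.ofReal_mul (by positivity), ENNReal.ofReal_inv_of_pos
            (pow_pos hs0 n)]
      simp_rw [h1]
      rw [lintegral_const_mul' _ _
        (ENNReal.inv_ne_top.mpr (ENNReal.ofReal_pos.mpr (pow_pos hs0 n)).ne')]
      have hmap : P.map (fun ω => B s ω) = gaussianReal 0 s.toNNReal := by
        have hmap0 := hB.gauss 0 s le_rfl hs0.le
        simpa [hB.init] using hmap0
      have hv0 : s.toNNReal ≠ 0 := by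
        simp [Real.toNNReal_eq_zero, not_le, hs0]
      have hlm : ∫⁻ ω, ENNReal.ofReal ((B s ω)^(2*n)) ∂P
          = ∫⁻ x, ENNReal.ofReal (x ^ (2*n)) ∂(gaussianReal 0 s.toNNReal) := by
        rw [← hmap, lintegral_map (Measurable.ennreal_ofReal (by fun_prop)) (hB.meas s)]
      rw [hlm, gaussianReal_moment _ hv0 n, Real.coe_toNNReal _ hs0.le]
      rw [mul_div_assoc, ENNReal.ofReal_mul (pow_nonneg hs0.le n), ← mul_assoc,
        ENNReal.inv_mul_cancel (ENNReal.ofReal_pos.mpr (pow_pos hs0 n)).ne'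
          ENNReal.ofReal_ne_top, one_mul]
    -- Hölder per ω then Tonelli
    have hYpow : ∀ ω, Y ω ^ n
        ≤ (ENNReal.ofReal T) ^ (n-1) * ∫⁻ s in Ioc (0:ℝ) T, g (s, ω) ^ n := by
      intro ω
      have hmeas : AEMeasurable (fun s => g (s, ω)) (volume.restrict (Ioc (0:ℝ) T)) :=
        (hg.comp (measurable_id.prodMk measurable_const)).aemeasurable
      have hp := pow_lintegral_le (volume.restrict (Ioc (0:ℝ) T)) hmeas n hn
      simpa [Real.volume_Ioc] using hp
    have hswap : ∫⁻ ω, (∫⁻ s in Ioc (0:ℝ) T, g (s, ω) ^ n) ∂P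
        = ∫⁻ s in Ioc (0:ℝ) T, (∫⁻ ω, g (s, ω) ^ n ∂P) := by
      exact lintegral_lintegral_swap
        (((hg.pow_const n).comp measurable_swap).aemeasurable)
    have hC : (0:ℝ) ≤ ((2*n).factorial : ℝ) / (2^n * n.factorial) := by positivity
    calc ENNReal.ofReal (k ^ n / n.factorial) * ∫⁻ ω, Y ω ^ n ∂P
        ≤ ENNReal.ofReal (k ^ n / n.factorial) *
            ((ENNReal.ofReal T)^(n-1) * ∫⁻ ω, (∫⁻ s in Ioc (0:ℝ) T, g (s, ω)^n) ∂P) := by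
          refine mul_le_mul_right ?_ _
          calc ∫⁻ ω, Y ω ^ n ∂P
              ≤ ∫⁻ ω, ((ENNReal.ofReal T)^(n-1) * ∫⁻ s in Ioc (0:ℝ) T, g (s,ω)^n) ∂P :=
                lintegral_mono hYpow
            _ = (ENNReal.ofReal T)^(n-1) * ∫⁻ ω, (∫⁻ s in Ioc (0:ℝ) T, g (s,ω)^n) ∂P :=
                lintegral_const_mul _
                  (Measurable.lintegral_prod_left' (μ := volume.restrict (Ioc (0:ℝ) T))
                    (hg.pow_const n))
      _ = ENNReal.ofReal (A n) := by
          rw [hswap, setLIntegral_congr_fun measurableSet_Ioc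
            hinner, setLIntegral_const, Real.volume_Ioc, sub_zero]
          rw [← ENNReal.ofReal_pow hT.le, ← ENNReal.ofReal_mul hC,
            ← ENNReal.ofReal_mul (pow_nonneg hT.le _), ← ENNReal.ofReal_mul (by positivity)]
          congr 1
          have hTn : T^(n-1) * T = T^n := by rw [← pow_succ, Nat.sub_add_cancel hn]
          have hstep : T^(n-1) * ((((2*n).factorial:ℝ)/(2^n * (n.factorial:ℝ))) * T)
              = T^n * (((2*n).factorial:ℝ)/(2^n*(n.factorial:ℝ))) := by
            rw [← hTn]; ring
          rw [hstep]
          simp only [hA]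
          rw [mul_pow]
          have hnf : ((n.factorial:ℝ)) ≠ 0 := Nat.cast_ne_zero.mpr (Nat.factorial_ne_zero n)
          field_simp
  calc ∫⁻ ω, ENNReal.ofReal (Real.exp (k * ∫ s in (0 : ℝ)..T, (B s ω) ^ 2 / s)) ∂P
      ≤ ∫⁻ ω, ∑' n : ℕ, ENNReal.ofReal (k ^ n / n.factorial) * Y ω ^ n ∂P :=
        lintegral_mono hptwise
    _ = ∑' n : ℕ, ∫⁻ ω, ENNReal.ofReal (k ^ n / n.factorial) * Y ω ^ n ∂P :=
        lintegral_tsum (fun n => ((hY.pow_const n).const_mul _).aemeasurable)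
    _ ≤ ∑' n : ℕ, ENNReal.ofReal (A n) := ENNReal.tsum_le_tsum hterm
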